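/- For n > 4 and 1 ≤ k ≤ n-2, the cardinality of the type-Dₙ collection labeled by suffix [n, n-2, …, k] equals the cardinality of the type-Dₙ collection labeled by [n, n-2, …, k, n-1] plus the cardinality of the type-D_{n-1} collection labeled by [n-1, n-3, …, k] (interpreted as [n-1] when k = n-2). Consequently the collection sizes satisfy the Catalan-triangle recursion |c(n,k)| = |c(n,k-1)| + |c(n-1,k)|. -/

import Mathlib

/-- Letters `i` and `j` (from `{1, …, n}`) are neighbors in the `Dₙ` Dynkin diagram:
`1 – 2 – ⋯ – (n-2)` is a path, and both `n-1` and `n` are adjacent to `n-2`. -/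
def dnAdj (n i j : ℕ) : Prop :=
  (i + 1 = j ∧ j ≤ n - 1) ∨ (j + 1 = i ∧ i ≤ n - 1) ∨
  (i = n ∧ j = n - 2) ∨ (j = n ∧ i = n - 2)

/-- A word `w` is homogeneous (with respect to a neighbor relation `adj`): whenever the same
letter appears in positions `r < s`, there are positions `t, u` with `r < t < u < s` whose
letters are both neighbors of that letter. -/
def Homog {α : Type*} (adj : α → α → Prop) (w : List α) : Prop :=
  ∀ r s : Fin w.length, (r : ℕ) < s → w.get r = w.get s →
    ∃ t u : Fin w.length, (r : ℕ) < t ∧ (t : ℕ) < u ∧ (u : ℕ) < s ∧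
      adj (w.get r) (w.get t) ∧ adj (w.get r) (w.get u)

/-- The descending word `[a, a-1, …, b]` (empty if `a < b`). -/
def desc (a b : ℕ) : List ℕ := (List.range (a + 1 - b)).map (fun t => a - t)

/-- The suffix word `s_{n,j₁} s_{n-1,j₂} s_{n,j₃} ⋯` of type `Dₙ` determined by the indices
`j₁ < j₂ < ⋯ < j_ℓ`; the boolean records whether the next segment starts with `n` (`true`)
or with `n-1` (`false`). -/
def suffixWord (n : ℕ) : Bool → List ℕ → List ℕ
  | _, [] => []
  | b, j :: js => ((if b then n else n - 1) :: desc (n - 2) j) ++ suffixWord n (!b) js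

/-- Validity of the indices `j₁ < j₂ < ⋯ < j_ℓ` of a suffix: strictly increasing and
contained in `{1, …, n-1}`. -/
def ValidSuffixIdx (n : ℕ) (js : List ℕ) : Prop :=
  js.Chain' (· < ·) ∧ ∀ j ∈ js, 1 ≤ j ∧ j ≤ n - 1

/-- The prefix word `s_{1,i₁} s_{2,i₂} ⋯ s_{n-1,i_{n-1}}` where `s_{k,i} = [k, k-1, …, i]`. -/
def prefixWord (n : ℕ) (i : ℕ → ℕ) : List ℕ :=
  (List.range (n - 1)).flatMap (fun k => desc (k + 1) (i (k + 1)))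

/-- Validity of the indices of a prefix: `1 ≤ i_k ≤ k + 1` for `1 ≤ k ≤ n-1`. -/
def ValidPrefixIdx (n : ℕ) (i : ℕ → ℕ) : Prop :=
  ∀ k, 1 ≤ k → k ≤ n - 1 → 1 ≤ i k ∧ i k ≤ k + 1

/-- The collection labeled by a suffix `suf`: all homogeneous canonical words of type `Dₙ`
with suffix `suf`. -/
def collection (n : ℕ) (suf : List ℕ) : Set (List ℕ) :=
  {w | ∃ i, ValidPrefixIdx n i ∧ w = prefixWord n i ++ suf ∧ Homog (dnAdj n) w}

/-! ### Auxiliary development -/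

namespace CollAux

/-- `getD`-based reformulation of homogeneity. -/
def HomogD (adj : ℕ → ℕ → Prop) (w : List ℕ) : Prop :=
  ∀ r s : ℕ, r < s → s < w.length → w.getD r 0 = w.getD s 0 →
    ∃ t u : ℕ, r < t ∧ t < u ∧ u < s ∧
      adj (w.getD r 0) (w.getD t 0) ∧ adj (w.getD r 0) (w.getD u 0)

theorem getD_eq_get {w : List ℕ} {r : ℕ} (h : r < w.length) :
    w.getD r 0 = w.get ⟨r, h⟩ := by
  rw [List.getD_eq_getElem _ _ h]; rfl

theorem homogD_iff {adj : ℕ → ℕ → Prop} {w : List ℕ} : Homog adj w ↔ HomogD adj w := by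
  constructor
  · intro H r s hrs hs heq
    have hr : r < w.length := hrs.trans hs
    rw [getD_eq_get hr, getD_eq_get hs] at heq
    obtain ⟨t, u, h1, h2, h3, h4, h5⟩ := H ⟨r, hr⟩ ⟨s, hs⟩ hrs heq
    refine ⟨t, u, h1, h2, h3, ?_, ?_⟩
    · rw [getD_eq_get hr, getD_eq_get t.isLt]; exact h4
    · rw [getD_eq_get hr, getD_eq_get u.isLt]; exact h5
  · intro H r s hrs heq
    obtain ⟨t, u, h1, h2, h3, h4, h5⟩ := H r s hrs s.isLt (by
      rw [getD_eq_get r.isLt, getD_eq_get s.isLt]; exact heq)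
    have ht : t < w.length := (h2.trans h3).trans s.isLt
    have hu : u < w.length := h3.trans s.isLt
    rw [getD_eq_get r.isLt, getD_eq_get ht] at h4
    rw [getD_eq_get r.isLt, getD_eq_get hu] at h5
    exact ⟨⟨t, ht⟩, ⟨u, hu⟩, h1, h2, h3, h4, h5⟩

theorem getD_append_left {w v : List ℕ} {r : ℕ} (h : r < w.length) :
    (w ++ v).getD r 0 = w.getD r 0 := by
  rw [List.getD_eq_getElem _ _ (by simp; omega), List.getD_eq_getElem _ _ h]
  exact List.getElem_append_left h

theorem getD_append_right {w v : List ℕ} {r : ℕ} (h : w.length ≤ r)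
    (h2 : r < w.length + v.length) : (w ++ v).getD r 0 = v.getD (r - w.length) 0 := by
  rw [List.getD_eq_getElem _ _ (by simp; omega), List.getD_eq_getElem _ _ (by omega)]
  exact List.getElem_append_right h

theorem getD_mem {w : List ℕ} {r : ℕ} (h : r < w.length) : w.getD r 0 ∈ w := by
  rw [List.getD_eq_getElem _ _ h]; exact List.getElem_mem h

/-- homogeneity passes to prefixes -/
theorem homogD_prefix {adj : ℕ → ℕ → Prop} {w v : List ℕ} (H : HomogD adj (w ++ v)) :
    HomogD adj w := by
  intro r s hrs hs heq
  have hr : r < w.length := hrs.trans hs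
  have hlen : s < (w ++ v).length := by simp; omega
  obtain ⟨t, u, h1, h2, h3, h4, h5⟩ := H r s hrs hlen (by
    rw [getD_append_left hr, getD_append_left hs]; exact heq)
  have ht : t < w.length := (h2.trans h3).trans hs
  have hu : u < w.length := h3.trans hs
  rw [getD_append_left hr] at h4 h5
  rw [getD_append_left ht] at h4
  rw [getD_append_left hu] at h5
  exact ⟨t, u, h1, h2, h3, h4, h5⟩

/-! ### desc lemmas -/

theorem desc_length (a b : ℕ) : (desc a b).length = a + 1 - b := by simp [desc]

theorem desc_getD {a b t : ℕ} (h : t < a + 1 - b) : (desc a b).getD t 0 = a - t := by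
  rw [List.getD_eq_getElem _ _ (by simp [desc_length]; omega)]
  simp [desc]

theorem desc_mem {a b x : ℕ} (h : x ∈ desc a b) : b ≤ x ∧ x ≤ a := by
  simp only [desc, List.mem_map, List.mem_range] at h
  obtain ⟨t, ht, rfl⟩ := h
  omega

theorem desc_cons {a b : ℕ} (ha : 1 ≤ b) (h : b ≤ a) : desc a b = a :: desc (a - 1) b := by
  unfold desc
  have : a + 1 - b = (a - 1 + 1 - b) + 1 := by omega
  rw [this, List.range_succ_eq_map]
  simp only [List.map_cons, Nat.sub_zero, List.map_map]
  congr 1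
  apply List.map_congr_left
  intro t _
  simp only [Function.comp_apply]
  omega

theorem desc_getLast? {a b : ℕ} (h : b ≤ a) : (desc a b).getLast? = some b := by
  have hlen : a + 1 - b - 1 < (desc a b).length := by rw [desc_length]; omega
  rw [List.getLast?_eq_getElem?, desc_length,
    List.getElem?_eq_getElem hlen, ← List.getD_eq_getElem _ 0 hlen, desc_getD (by omega)]
  congr 1
  omega

theorem desc_nil {a b : ℕ} (h : a < b) : desc a b = [] := by
  unfold desc
  have : a + 1 - b = 0 := by omega
  simp [this]

end CollAux

/-! ### adjacency lemmas (all by omega) -/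

section Adj
variable {n : ℕ} (hn : 5 ≤ n)
include hn

theorem adj_low {a b : ℕ} (ha : a ≤ n - 2) (hb : b ≤ n - 2) :
    dnAdj n a b ↔ (a + 1 = b ∨ b + 1 = a) := by unfold dnAdj; omega

theorem adj_low' {a b : ℕ} (ha : a ≤ n - 2) (hb : b ≤ n - 2) :
    dnAdj (n - 1) a b ↔ (a + 1 = b ∨ b + 1 = a) := by unfold dnAdj; omega

theorem adj_n1_iff {x : ℕ} : dnAdj n (n - 1) x ↔ x = n - 2 := by unfold dnAdj; omega

theorem adj_m_n1 {m : ℕ} (hm : m ≤ n - 3) : ¬ dnAdj n m (n - 1) := by unfold dnAdj; omega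

theorem adj_m_n {m : ℕ} (hm : m ≤ n - 3) : ¬ dnAdj n m n := by unfold dnAdj; omega

theorem adj_m_n2 {m : ℕ} (hm : m ≤ n - 3) : dnAdj n m (n - 2) ↔ m = n - 3 := by
  unfold dnAdj; omega

theorem adj_m_n1' {m : ℕ} (hm : m ≤ n - 3) : dnAdj (n - 1) m (n - 1) ↔ m = n - 3 := by
  unfold dnAdj; omega

theorem adj_n2_n1 : dnAdj n (n - 2) (n - 1) := by unfold dnAdj; omega

theorem adj_n2_n : dnAdj n (n - 2) n := by unfold dnAdj; omega

end Adj

/-! ### prefixWord lemmas -/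

theorem prefixWord_mem {n : ℕ} {i : ℕ → ℕ} (hv : ValidPrefixIdx n i) {x : ℕ}
    (hx : x ∈ prefixWord n i) : 1 ≤ x ∧ x ≤ n - 1 := by
  simp only [prefixWord, List.mem_flatMap, List.mem_range] at hx
  obtain ⟨k, hk, hmem⟩ := hx
  obtain ⟨h1, h2⟩ := CollAux.desc_mem hmem
  have := hv (k + 1) (by omega) (by omega)
  omega

theorem prefixWord_succ {n : ℕ} (hn : 2 ≤ n) (i : ℕ → ℕ) :
    prefixWord n i = prefixWord (n - 1) i ++ desc (n - 1) (i (n - 1)) := by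
  have h1 : n - 1 = (n - 2) + 1 := by omega
  unfold prefixWord
  rw [h1, List.range_succ, List.flatMap_append, Nat.add_sub_cancel]
  simp

theorem prefixWord_congr {n : ℕ} {i i' : ℕ → ℕ}
    (h : ∀ j, 1 ≤ j → j ≤ n - 1 → i j = i' j) : prefixWord n i = prefixWord n i' := by
  unfold prefixWord
  rw [List.flatMap_def, List.flatMap_def]
  congr 1
  apply List.map_congr_left
  intro t ht
  rw [List.mem_range] at ht
  rw [h (t + 1) (by omega) (by omega)]

theorem validPrefixIdx_restrict {n : ℕ} {i : ℕ → ℕ} (hn : 2 ≤ n)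
    (hv : ValidPrefixIdx n i) : ValidPrefixIdx (n - 1) i := by
  intro k h1 h2
  exact hv k h1 (by omega)

/-! ### suffixWord computations -/

theorem suffixWord_single {n k : ℕ} : suffixWord n true [k] = n :: desc (n - 2) k := by
  simp [suffixWord]

theorem suffixWord_pair {n k : ℕ} (hn : 5 ≤ n) (hk : k ≤ n - 2) :
    suffixWord n true [k, n - 1] = (n :: desc (n - 2) k) ++ [n - 1] := by
  simp [suffixWord, CollAux.desc_nil (show n - 2 < n - 1 by omega)]

/-! ### Lemma B: homogeneity transfer between `Dₙ` and `D_{n-1}` words -/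

namespace CollAux

section LemB

variable {n k : ℕ} {P : List ℕ}

-- letter lemmas for W = P ++ (n-1) :: n :: desc (n-2) k
theorem W_length (hn : 5 ≤ n) (hk2 : k ≤ n - 2) :
    (P ++ (n-1) :: n :: desc (n-2) k).length = P.length + 2 + (n - 1 - k) := by
  simp [desc_length]; omega

theorem W'_length (hn : 5 ≤ n) (hk2 : k ≤ n - 2) :
    (P ++ (n-1) :: desc (n-3) k).length = P.length + 1 + (n - 2 - k) := by
  simp [desc_length]; omega

theorem W_getD_P {r : ℕ} (h : r < P.length) :
    (P ++ (n-1) :: n :: desc (n-2) k).getD r 0 = P.getD r 0 := getD_append_left h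

theorem W'_getD_P {r : ℕ} (h : r < P.length) :
    (P ++ (n-1) :: desc (n-3) k).getD r 0 = P.getD r 0 := getD_append_left h

theorem W_getD_p : (P ++ (n-1) :: n :: desc (n-2) k).getD P.length 0 = n - 1 := by
  rw [getD_append_right le_rfl (by simp only [List.length_cons]; omega)]
  simp

theorem W'_getD_p : (P ++ (n-1) :: desc (n-3) k).getD P.length 0 = n - 1 := by
  rw [getD_append_right le_rfl (by simp only [List.length_cons]; omega)]
  simp

theorem W_getD_p1 : (P ++ (n-1) :: n :: desc (n-2) k).getD (P.length + 1) 0 = n := by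
  rw [getD_append_right (by omega) (by simp only [List.length_cons]; omega)]
  have : P.length + 1 - P.length = 1 := by omega
  rw [this]
  simp

theorem W_getD_desc (hn : 5 ≤ n) (hk2 : k ≤ n - 2) {m : ℕ} (hm : m < n - 1 - k) :
    (P ++ (n-1) :: n :: desc (n-2) k).getD (P.length + 2 + m) 0 = n - 2 - m := by
  rw [getD_append_right (by omega)
    (by simp only [List.length_cons, desc_length]; omega)]
  have : P.length + 2 + m - P.length = m + 1 + 1 := by omega
  rw [this, List.getD_cons_succ, List.getD_cons_succ, desc_getD (by omega)]

theorem W'_getD_desc (hn : 5 ≤ n) (hk2 : k ≤ n - 2) {m : ℕ} (hm : m < n - 2 - k) :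
    (P ++ (n-1) :: desc (n-3) k).getD (P.length + 1 + m) 0 = n - 3 - m := by
  rw [getD_append_right (by omega)
    (by simp only [List.length_cons, desc_length]; omega)]
  have : P.length + 1 + m - P.length = m + 1 := by omega
  rw [this, List.getD_cons_succ, desc_getD (by omega)]

theorem P_getD_bounds (hP : ∀ x ∈ P, 1 ≤ x ∧ x ≤ n - 2) {r : ℕ} (h : r < P.length) :
    1 ≤ P.getD r 0 ∧ P.getD r 0 ≤ n - 2 := hP _ (getD_mem h)

theorem lemB_fwd (hn : 5 ≤ n) (hk1 : 1 ≤ k) (hk2 : k ≤ n - 2)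
    (hP : ∀ x ∈ P, 1 ≤ x ∧ x ≤ n - 2)
    (H : HomogD (dnAdj (n-1)) (P ++ (n-1) :: desc (n-3) k)) :
    HomogD (dnAdj n) (P ++ (n-1) :: n :: desc (n-2) k) := by
  set p := P.length with hp
  intro r s hrs hs heq
  rw [W_length hn hk2] at hs
  by_cases hsp : s < p
  · -- both in P: use the pair in W' directly
    have hrP : r < p := hrs.trans hsp
    rw [W_getD_P hrP, W_getD_P hsp] at heq
    rw [W_getD_P hrP]
    obtain ⟨t, u, h1, h2, h3, h4, h5⟩ := H r s hrs (by rw [W'_length hn hk2]; omega)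
      (by rw [W'_getD_P hrP, W'_getD_P hsp]; exact heq)
    have htP : t < p := (h2.trans h3).trans hsp
    have huP : u < p := h3.trans hsp
    rw [W'_getD_P hrP, W'_getD_P htP] at h4
    rw [W'_getD_P hrP, W'_getD_P huP] at h5
    have hb1 := P_getD_bounds hP hrP
    have hb2 := P_getD_bounds hP htP
    have hb3 := P_getD_bounds hP huP
    refine ⟨t, u, h1, h2, h3, ?_, ?_⟩
    · rw [W_getD_P htP]
      exact (adj_low hn hb1.2 hb2.2).mpr ((adj_low' hn hb1.2 hb2.2).mp h4)
    · rw [W_getD_P huP]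
      exact (adj_low hn hb1.2 hb3.2).mpr ((adj_low' hn hb1.2 hb3.2).mp h5)
  · by_cases hsp0 : s = p
    · -- s is the (n-1); no earlier occurrence
      exfalso
      subst hsp0
      rw [W_getD_P hrs, W_getD_p] at heq
      have := P_getD_bounds hP hrs
      omega
    · by_cases hsp1 : s = p + 1
      · -- s is the n; no earlier occurrence
        exfalso
        subst hsp1
        rw [W_getD_p1] at heq
        rcases Nat.lt_or_ge r p with h | h
        · rw [W_getD_P h] at heq
          have := P_getD_bounds hP h
          omega
        · have : r = p := by omega
          subst this
          rw [W_getD_p] at heq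
          omega
      · -- s in the descending tail
        obtain ⟨m, hm, rfl⟩ : ∃ m, m < n - 1 - k ∧ s = p + 2 + m := ⟨s - p - 2, by omega, by omega⟩
        rw [W_getD_desc hn hk2 hm] at heq
        by_cases hm0 : m = 0
        · -- s is the n-2: explicit witnesses p, p+1
          subst hm0
          -- r must be in P
          have hrP : r < p := by
            rcases Nat.lt_or_ge r p with h | h
            · exact h
            · exfalso
              rcases Nat.lt_or_ge r (p+1) with h' | h'
              · have : r = p := by omega
                subst this; rw [W_getD_p] at heq; omega
              · have : r = p + 1 := by omega
                subst this; rw [W_getD_p1] at heq; omega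
          rw [W_getD_P hrP] at heq
          rw [W_getD_P hrP]
          refine ⟨p, p + 1, hrP, by omega, by omega, ?_, ?_⟩
          · rw [W_getD_p, heq]; simpa using adj_n2_n1 hn
          · rw [W_getD_p1, heq]; simpa using adj_n2_n hn
        · -- s carries letter a = n-2-m ≤ n-3 : map witnesses from W'
          have ha_le : n - 2 - m ≤ n - 3 := by omega
          have hrP : r < p := by
            rcases Nat.lt_or_ge r p with h | h
            · exact h
            · exfalso
              rcases Nat.lt_or_ge r (p+1) with h' | h'
              · have : r = p := by omega
                subst this; rw [W_getD_p] at heq; omega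
              · rcases Nat.lt_or_ge r (p+2) with h'' | h''
                · have : r = p + 1 := by omega
                  subst this; rw [W_getD_p1] at heq; omega
                · obtain ⟨m', hm', rfl⟩ : ∃ m', m' < m ∧ r = p + 2 + m' :=
                    ⟨r - p - 2, by omega, by omega⟩
                  rw [W_getD_desc hn hk2 (by omega)] at heq
                  omega
          rw [W_getD_P hrP] at heq
          rw [W_getD_P hrP]
          -- the corresponding pair in W' is (r, p+m)
          obtain ⟨t, u, h1, h2, h3, h4, h5⟩ := H r (p + m) (by omega)
            (by rw [W'_length hn hk2]; omega)
            (by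
              rw [W'_getD_P hrP]
              have : p + m = p + 1 + (m - 1) := by omega
              rw [this, W'_getD_desc hn hk2 (by omega), heq]
              omega)
          rw [W'_getD_P hrP] at h4 h5
          have hbr := P_getD_bounds hP hrP
          -- witness transfer map
          have key : ∀ t', r < t' → t' < p + m → dnAdj (n-1) (P.getD r 0) ((P ++ (n-1) :: desc (n-3) k).getD t' 0) →
              dnAdj n (P.getD r 0) ((P ++ (n-1) :: n :: desc (n-2) k).getD (if t' < p then t' else t' + 2) 0) := by
            intro t' ht1 ht2 hadj
            by_cases htp : t' < p
            · simp only [if_pos htp]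
              rw [W'_getD_P htp] at hadj
              rw [W_getD_P htp]
              have hbt := P_getD_bounds hP htp
              exact (adj_low hn hbr.2 hbt.2).mpr ((adj_low' hn hbr.2 hbt.2).mp hadj)
            · simp only [if_neg htp]
              push_neg at htp
              by_cases htp0 : t' = p
              · subst htp0
                rw [W'_getD_p] at hadj
                have ha3 : P.getD r 0 = n - 3 := (adj_m_n1' hn (by omega)).mp hadj
                have : p + 2 = p + 2 + 0 := by omega
                rw [this, W_getD_desc hn hk2 (by omega)]
                rw [ha3]
                exact (adj_m_n2 hn (by omega)).mpr (by omega)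
              · obtain ⟨m'', hm'', rfl⟩ : ∃ m'', m'' < m - 1 ∧ t' = p + 1 + m'' :=
                  ⟨t' - p - 1, by omega, by omega⟩
                rw [W'_getD_desc hn hk2 (by omega)] at hadj
                have : p + 1 + m'' + 2 = p + 2 + (m'' + 1) := by omega
                rw [this, W_getD_desc hn hk2 (by omega)]
                have heq2 : n - 2 - (m'' + 1) = n - 3 - m'' := by omega
                rw [heq2]
                exact (adj_low hn hbr.2 (by omega)).mpr ((adj_low' hn hbr.2 (by omega)).mp hadj)
          have ht' := key t (h1) (h2.trans h3) h4
          have hu' := key u (h1.trans h2) h3 h5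
          refine ⟨(if t < p then t else t + 2), (if u < p then u else u + 2), ?_, ?_, ?_, ht', hu'⟩
          · split_ifs <;> omega
          · split_ifs <;> omega
          · split_ifs <;> omega

end LemB

end CollAux

namespace CollAux

section LemB2

variable {n k : ℕ} {P : List ℕ}

theorem lemB_bwd (hn : 5 ≤ n) (hk1 : 1 ≤ k) (hk2 : k ≤ n - 2)
    (hP : ∀ x ∈ P, 1 ≤ x ∧ x ≤ n - 2)
    (H : HomogD (dnAdj n) (P ++ (n-1) :: n :: desc (n-2) k)) :
    HomogD (dnAdj (n-1)) (P ++ (n-1) :: desc (n-3) k) := by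
  set p := P.length with hp
  intro r s hrs hs heq
  rw [W'_length hn hk2] at hs
  by_cases hsp : s < p
  · have hrP : r < p := hrs.trans hsp
    rw [W'_getD_P hrP, W'_getD_P hsp] at heq
    rw [W'_getD_P hrP]
    obtain ⟨t, u, h1, h2, h3, h4, h5⟩ := H r s hrs (by rw [W_length hn hk2]; omega)
      (by rw [W_getD_P hrP, W_getD_P hsp]; exact heq)
    have htP : t < p := (h2.trans h3).trans hsp
    have huP : u < p := h3.trans hsp
    rw [W_getD_P hrP, W_getD_P htP] at h4
    rw [W_getD_P hrP, W_getD_P huP] at h5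
    have hb1 := P_getD_bounds hP hrP
    have hb2 := P_getD_bounds hP htP
    have hb3 := P_getD_bounds hP huP
    refine ⟨t, u, h1, h2, h3, ?_, ?_⟩
    · rw [W'_getD_P htP]
      exact (adj_low' hn hb1.2 hb2.2).mpr ((adj_low hn hb1.2 hb2.2).mp h4)
    · rw [W'_getD_P huP]
      exact (adj_low' hn hb1.2 hb3.2).mpr ((adj_low hn hb1.2 hb3.2).mp h5)
  · by_cases hsp0 : s = p
    · exfalso
      subst hsp0
      rw [W'_getD_P hrs, W'_getD_p] at heq
      have := P_getD_bounds hP hrs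
      omega
    · obtain ⟨m, hm, rfl⟩ : ∃ m, m < n - 2 - k ∧ s = p + 1 + m := ⟨s - p - 1, by omega, by omega⟩
      rw [W'_getD_desc hn hk2 hm] at heq
      have hrP : r < p := by
        rcases Nat.lt_or_ge r p with h | h
        · exact h
        · exfalso
          rcases Nat.lt_or_ge r (p+1) with h' | h'
          · have : r = p := by omega
            subst this; rw [W'_getD_p] at heq; omega
          · obtain ⟨m', hm', rfl⟩ : ∃ m', m' < m ∧ r = p + 1 + m' :=
              ⟨r - p - 1, by omega, by omega⟩
            rw [W'_getD_desc hn hk2 (by omega)] at heq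
            omega
      rw [W'_getD_P hrP] at heq
      rw [W'_getD_P hrP]
      have hbr := P_getD_bounds hP hrP
      -- corresponding pair in W at (r, p+2+(m+1))
      obtain ⟨t, u, h1, h2, h3, h4, h5⟩ := H r (p + 2 + (m + 1)) (by omega)
        (by rw [W_length hn hk2]; omega)
        (by
          rw [W_getD_P hrP, W_getD_desc hn hk2 (by omega), heq]
          omega)
      rw [W_getD_P hrP] at h4 h5
      have key : ∀ t', r < t' → t' < p + 2 + (m + 1) →
          dnAdj n (P.getD r 0) ((P ++ (n-1) :: n :: desc (n-2) k).getD t' 0) →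
          (t' < p ∨ p + 2 ≤ t') ∧
          dnAdj (n-1) (P.getD r 0) ((P ++ (n-1) :: desc (n-3) k).getD (if t' < p then t' else t' - 2) 0) := by
        intro t' ht1 ht2 hadj
        by_cases htp : t' < p
        · refine ⟨Or.inl htp, ?_⟩
          simp only [if_pos htp]
          rw [W_getD_P htp] at hadj
          rw [W'_getD_P htp]
          have hbt := P_getD_bounds hP htp
          exact (adj_low' hn hbr.2 hbt.2).mpr ((adj_low hn hbr.2 hbt.2).mp hadj)
        · push_neg at htp
          by_cases htp0 : t' = p
          · exfalso
            subst htp0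
            rw [W_getD_p] at hadj
            exact adj_m_n1 hn (show P.getD r 0 ≤ n - 3 by omega) hadj
          · by_cases htp1 : t' = p + 1
            · exfalso
              subst htp1
              rw [W_getD_p1] at hadj
              exact adj_m_n hn (show P.getD r 0 ≤ n - 3 by omega) hadj
            · obtain ⟨m'', hm'', rfl⟩ : ∃ m'', m'' < m + 1 ∧ t' = p + 2 + m'' :=
                ⟨t' - p - 2, by omega, by omega⟩
              refine ⟨Or.inr (by omega), ?_⟩
              rw [W_getD_desc hn hk2 (by omega)] at hadj
              simp only [if_neg (show ¬ (p + 2 + m'' < p) by omega)]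
              by_cases hm''0 : m'' = 0
              · subst hm''0
                have ha3 : P.getD r 0 = n - 3 := by
                  have := (adj_m_n2 hn (show P.getD r 0 ≤ n - 3 by omega)).mp
                    (by simpa using hadj)
                  omega
                have : p + 2 + 0 - 2 = p := by omega
                rw [this, W'_getD_p, ha3]
                exact (adj_m_n1' hn (by omega)).mpr rfl
              · have : p + 2 + m'' - 2 = p + 1 + (m'' - 1) := by omega
                rw [this, W'_getD_desc hn hk2 (by omega)]
                have heq2 : n - 3 - (m'' - 1) = n - 2 - m'' := by omega
                rw [heq2]
                exact (adj_low' hn hbr.2 (by omega)).mpr ((adj_low hn hbr.2 (by omega)).mp hadj)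
      obtain ⟨ht0, ht'⟩ := key t h1 (h2.trans h3) h4
      obtain ⟨hu0, hu'⟩ := key u (h1.trans h2) h3 h5
      refine ⟨(if t < p then t else t - 2), (if u < p then u else u - 2), ?_, ?_, ?_, ht', hu'⟩
      · split_ifs <;> omega
      · split_ifs <;> omega
      · split_ifs <;> omega

end LemB2

end CollAux

namespace CollAux

theorem mem_of_getLast' : ∀ {l : List ℕ} {x : ℕ}, l.getLast? = some x → x ∈ l
  | [], _, h => by simp at h
  | [a], x, h => by
      simp only [List.getLast?_singleton, Option.some_inj] at h
      simp [h]
  | a :: b :: t, x, h => by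
      rw [List.getLast?_cons_cons] at h
      exact List.mem_cons_of_mem _ (mem_of_getLast' h)

section LemA

variable {n k : ℕ} {i : ℕ → ℕ}

/-- occurrences of `n-1` in the prefix have two `n-2`-witnesses to the right, so appending
`n-1` preserves homogeneity (when the last prefix segment is not exactly `[n-1]`). -/
theorem lemA_fwd (hn : 5 ≤ n) (hk1 : 1 ≤ k) (hk2 : k ≤ n - 2)
    (hv : ValidPrefixIdx n i) (hne : i (n - 1) ≠ n - 1)
    (H : HomogD (dnAdj n) (prefixWord n i ++ n :: desc (n - 2) k)) :
    HomogD (dnAdj n) ((prefixWord n i ++ n :: desc (n - 2) k) ++ [n - 1]) := by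
  set w := prefixWord n i ++ n :: desc (n - 2) k with hw
  intro r s hrs hs heq
  simp only [List.length_append, List.length_cons] at hs
  by_cases hsw : s < w.length
  · -- pair inside w
    rw [getD_append_left (hrs.trans hsw), getD_append_left hsw] at heq
    obtain ⟨t, u, h1, h2, h3, h4, h5⟩ := H r s hrs hsw heq
    have ht : t < w.length := (h2.trans h3).trans hsw
    have hu : u < w.length := h3.trans hsw
    refine ⟨t, u, h1, h2, h3, ?_, ?_⟩
    · rw [getD_append_left (hrs.trans hsw), getD_append_left ht]; exact h4
    · rw [getD_append_left (hrs.trans hsw), getD_append_left hu]; exact h5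
  · -- s is the appended n-1
    have hsl : s = w.length := by simp at hs; omega
    subst hsl
    have hrw : r < w.length := hrs
    rw [getD_append_left hrw,
      getD_append_right le_rfl (by simp), Nat.sub_self, List.getD_cons_zero] at heq
    -- decompose the prefix
    have hvr := validPrefixIdx_restrict (by omega) hv
    have hsucc := prefixWord_succ (show 2 ≤ n by omega) i
    set P := prefixWord (n - 1) i with hP
    set c := i (n - 1) with hc
    have hcb : 1 ≤ c ∧ c ≤ n := by
      have := hv (n - 1) (by omega) (by omega); omega
    have hPmem : ∀ x ∈ P, 1 ≤ x ∧ x ≤ n - 2 := by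
      intro x hx
      have := prefixWord_mem hvr hx
      omega
    set p := P.length with hp
    set d := (desc (n - 1) c).length with hd
    have hdl : d = n - c := by rw [hd, desc_length]; omega
    have hwl : w.length = p + d + 1 + (n - 1 - k) := by
      rw [hw, hsucc]; simp [desc_length]; omega
    -- find where r is
    by_cases hr1 : r < p
    · exfalso
      rw [hw, hsucc, List.append_assoc, getD_append_left hr1] at heq
      have := hPmem _ (getD_mem hr1)
      omega
    · by_cases hr2 : r < p + d
      · -- r is in the segment desc (n-1) c : must be its head, letter n-1
        have hrd : r - p < d := by omega
        have heq' : n - 1 - (r - p) = n - 1 := by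
          rw [hw, hsucc, List.append_assoc, getD_append_right (by omega) (by
              simp only [List.length_append, List.length_cons, desc_length]; omega)] at heq
          rw [getD_append_left (by omega)] at heq
          rw [desc_getD (by omega)] at heq
          omega
        have hrp : r = p := by omega
        have hcn : c ≤ n - 2 := by
          rcases Nat.lt_or_ge c (n - 1) with h | h
          · omega
          · exfalso
            have : c = n := by omega
            rw [this] at hdl
            omega
        have hd2 : 2 ≤ d := by omega
        -- witnesses : position p+1 (letter n-2 in the segment) and p+d+1 (n-2 in suffix)
        refine ⟨p + 1, p + d + 1, by omega, by omega, by omega, ?_, ?_⟩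
        · rw [getD_append_left hrw, heq,
            getD_append_left (show p + 1 < (w).length by omega)]
          rw [hw, hsucc, List.append_assoc, getD_append_right (by omega) (by
              simp only [List.length_append, List.length_cons, desc_length]; omega)]
          rw [getD_append_left (by omega)]
          rw [desc_getD (by omega)]
          have : n - 1 - (p + 1 - p) = n - 2 := by omega
          rw [this]
          exact (adj_n1_iff hn).mpr rfl
        · rw [getD_append_left hrw, heq,
            getD_append_left (show p + d + 1 < (w).length by omega)]
          rw [hw, hsucc, List.append_assoc, getD_append_right (by omega) (by
              simp only [List.length_append, List.length_cons, desc_length]; omega)]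
          rw [getD_append_right (by omega) (by
              simp only [List.length_append, List.length_cons, desc_length]; omega)]
          have hsub : p + d + 1 - P.length - (desc (n - 1) c).length = 1 := by omega
          rw [hsub, List.getD_cons_succ, desc_getD (by omega)]
          have : n - 2 - 0 = n - 2 := by omega
          rw [this]
          exact (adj_n1_iff hn).mpr rfl
      · -- r is in the final segment n :: desc (n-2) k : letters are n or ≤ n-2
        exfalso
        rw [hw, hsucc, List.append_assoc, getD_append_right (by omega) (by
            simp only [List.length_append, List.length_cons, desc_length]; omega)] at heq
        rw [getD_append_right (by omega) (by
            simp only [List.length_append, List.length_cons, desc_length]; omega)] at heq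
        obtain ⟨e, he⟩ : ∃ e, r - P.length - (desc (n - 1) c).length = e := ⟨_, rfl⟩
        rw [he] at heq
        have heb : e < 1 + (n - 1 - k) := by omega
        rcases Nat.eq_zero_or_pos e with h0 | h0
        · rw [h0, List.getD_cons_zero] at heq; omega
        · obtain ⟨m, rfl⟩ : ∃ m, e = m + 1 := ⟨e - 1, by omega⟩
          rw [List.getD_cons_succ, desc_getD (by omega)] at heq
          omega

end LemA

end CollAux

namespace CollAux

section Misc

variable {n k : ℕ} {i : ℕ → ℕ}

theorem desc_n1_self (hn : 5 ≤ n) : desc (n - 1) (n - 1) = [n - 1] := by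
  rw [desc_cons (by omega) le_rfl, desc_nil (by omega)]

/-- If the prefix ends with the bare segment `[n-1]`, appending `n-1` destroys homogeneity. -/
theorem notE (hn : 5 ≤ n) (hk1 : 1 ≤ k) (hk2 : k ≤ n - 2) (hv : ValidPrefixIdx n i)
    (H : HomogD (dnAdj n) ((prefixWord n i ++ n :: desc (n - 2) k) ++ [n - 1])) :
    i (n - 1) ≠ n - 1 := by
  intro hceq
  have hvr := validPrefixIdx_restrict (show 2 ≤ n by omega) hv
  set P := prefixWord (n - 1) i with hP
  have hPmem : ∀ x ∈ P, 1 ≤ x ∧ x ≤ n - 2 := by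
    intro x hx
    have := prefixWord_mem hvr hx
    omega
  set p := P.length with hp
  have hweq : prefixWord n i ++ n :: desc (n - 2) k = P ++ (n-1) :: n :: desc (n - 2) k := by
    rw [prefixWord_succ (show 2 ≤ n by omega), hceq, desc_n1_self hn]
    simp
    rfl
  rw [hweq] at H
  set w := P ++ (n-1) :: n :: desc (n - 2) k with hw
  have hwl : w.length = p + 2 + (n - 1 - k) := W_length hn hk2
  have e1 : (w ++ [n-1]).getD p 0 = n - 1 := by
    rw [getD_append_left (show p < w.length by omega), hp, hw]
    exact W_getD_p
  have e2 : (w ++ [n-1]).getD w.length 0 = n - 1 := by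
    rw [getD_append_right le_rfl (by simp), Nat.sub_self, List.getD_cons_zero]
  obtain ⟨t, u, h1, h2, h3, h4, h5⟩ := H p w.length (by omega) (by simp) (by rw [e1, e2])
  rw [e1] at h4 h5
  have key : ∀ t', p < t' → t' < w.length → dnAdj n (n - 1) ((w ++ [n-1]).getD t' 0) →
      t' = p + 2 := by
    intro t' ht1 ht2 hadj
    rw [getD_append_left ht2] at hadj
    have hlet : w.getD t' 0 = n - 2 := (adj_n1_iff hn).mp hadj
    by_cases h' : t' = p + 1
    · subst h'
      rw [hw, W_getD_p1] at hlet
      omega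
    · obtain ⟨m, hm, rfl⟩ : ∃ m, m < n - 1 - k ∧ t' = p + 2 + m :=
        ⟨t' - p - 2, by omega, by omega⟩
      rw [hw, W_getD_desc hn hk2 hm] at hlet
      omega
  have ht := key t h1 (h2.trans h3) h4
  have hu := key u (h1.trans h2) h3 h5
  omega

/-- characterization of the split predicate -/
theorem E_iff (hn : 5 ≤ n) (hk1 : 1 ≤ k) (hk2 : k ≤ n - 2) (hv : ValidPrefixIdx n i) :
    ((prefixWord n i ++ n :: desc (n - 2) k).take
      ((prefixWord n i ++ n :: desc (n - 2) k).length - (n - k))).getLast? = some (n - 1)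
    ↔ i (n - 1) = n - 1 := by
  have hlen : (prefixWord n i ++ n :: desc (n - 2) k).length - (n - k) =
      (prefixWord n i).length := by
    simp [desc_length]; omega
  rw [hlen, List.take_left]
  rw [prefixWord_succ (show 2 ≤ n by omega)]
  have hvr := validPrefixIdx_restrict (show 2 ≤ n by omega) hv
  have hcb : 1 ≤ i (n - 1) ∧ i (n - 1) ≤ n := by
    have := hv (n - 1) (by omega) (by omega); omega
  by_cases hc : i (n - 1) ≤ n - 1
  · rw [List.getLast?_append, desc_getLast? (by omega)]
    simp
  · have hcn : i (n - 1) = n := by omega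
    rw [hcn, desc_nil (by omega), List.append_nil]
    constructor
    · intro h
      exfalso
      have := prefixWord_mem hvr (mem_of_getLast' h)
      omega
    · intro h
      omega

end Misc

theorem collection_finite (n : ℕ) (suf : List ℕ) : (collection n suf).Finite := by
  apply Set.Finite.subset (Set.finite_range
    (fun f : Fin n → Fin (n + 2) =>
      prefixWord n (fun j => if h : j < n then (f ⟨j, h⟩ : ℕ) else 0) ++ suf))
  rintro w ⟨i, hv, rfl, -⟩
  refine ⟨fun j => ⟨min (i (j : ℕ)) (n + 1), by omega⟩, ?_⟩
  have heq : prefixWord n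
      (fun j => if h : j < n then ((⟨min (i j) (n + 1), by omega⟩ : Fin (n + 2)) : ℕ) else 0) =
      prefixWord n i := by
    apply prefixWord_congr
    intro j h1 h2
    have := hv j h1 h2
    rw [dif_pos (show j < n by omega)]
    simp only [Fin.val_mk]
    omega
  exact congrArg (· ++ suf) heq

end CollAux

open CollAux in
/-- For `n > 4` and `1 ≤ k ≤ n-2`, the size of the type-`Dₙ` collection labeled by
`[n, n-2, …, k]` equals the size of the type-`Dₙ` collection labeled by
`[n, n-2, …, k, n-1]` plus the size of the type-`D_{n-1}` collection labeled by
`[n-1, n-3, …, k]`; i.e. the collection sizes satisfy the Catalan-triangle recursion. -/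
theorem collection_recursion (n k : ℕ) (hn : 4 < n) (hk1 : 1 ≤ k) (hk2 : k ≤ n - 2) :
    Nat.card ↥(collection n (suffixWord n true [k])) =
      Nat.card ↥(collection n (suffixWord n true [k, n - 1])) +
      Nat.card ↥(collection (n - 1) (suffixWord (n - 1) true [k])) := by
  have hn5 : 5 ≤ n := hn
  rw [show suffixWord (n - 1) true [k] = (n - 1) :: desc (n - 3) k by
        rw [suffixWord_single, show n - 1 - 2 = n - 3 by omega],
    show suffixWord n true [k] = n :: desc (n - 2) k from suffixWord_single,
    suffixWord_pair hn5 hk2]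
  set C := collection n (n :: desc (n - 2) k) with hC
  set L := collection n ((n :: desc (n - 2) k) ++ [n - 1]) with hL
  set R := collection (n - 1) ((n - 1) :: desc (n - 3) k) with hR
  have finL : L.Finite := collection_finite _ _
  have finR : R.Finite := collection_finite _ _
  set F : List ℕ → List ℕ :=
    fun w => w.take (w.length - (n - 1 - k)) ++ ((n - 1) :: n :: desc (n - 2) k) with hF
  -- computation of F on R-shaped words
  have hcompute : ∀ P : List ℕ,
      F (P ++ ((n - 1) :: desc (n - 3) k)) = P ++ ((n - 1) :: n :: desc (n - 2) k) := by
    intro P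
    rw [hF]
    simp only
    congr 1
    have h1 : (P ++ ((n - 1) :: desc (n - 3) k)).length - (n - 1 - k) = P.length := by
      simp [desc_length]; omega
    rw [h1, List.take_left]
  have hPfact : ∀ i : ℕ → ℕ, ValidPrefixIdx (n - 1) i →
      ∀ x ∈ prefixWord (n - 1) i, 1 ≤ x ∧ x ≤ n - 2 := by
    intro i hv x hx
    have := prefixWord_mem hv hx
    omega
  have hprefix_eq : ∀ i : ℕ → ℕ, i (n - 1) = n - 1 →
      prefixWord n i ++ n :: desc (n - 2) k =
        prefixWord (n - 1) i ++ ((n - 1) :: n :: desc (n - 2) k) := by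
    intro i hc
    rw [prefixWord_succ (show 2 ≤ n by omega), hc, desc_n1_self hn5]
    simp
  -- the split of C
  have hsplit : C = List.dropLast '' L ∪ F '' R := by
    ext w
    constructor
    · rintro ⟨i, hv, rfl, hhom⟩
      by_cases hc : i (n - 1) = n - 1
      · right
        refine ⟨prefixWord (n - 1) i ++ ((n - 1) :: desc (n - 3) k),
          ⟨i, validPrefixIdx_restrict (by omega) hv, rfl, ?_⟩, ?_⟩
        · apply homogD_iff.mpr
          apply lemB_bwd hn5 hk1 hk2 (hPfact i (validPrefixIdx_restrict (by omega) hv))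
          have h := homogD_iff.mp hhom
          rwa [hprefix_eq i hc] at h
        · rw [hcompute]
          exact (hprefix_eq i hc).symm
      · left
        refine ⟨(prefixWord n i ++ n :: desc (n - 2) k) ++ [n - 1],
          ⟨i, hv, List.append_assoc _ _ _, ?_⟩, List.dropLast_concat⟩
        exact homogD_iff.mpr (lemA_fwd hn5 hk1 hk2 hv hc (homogD_iff.mp hhom))
    · rintro (⟨v, ⟨i, hvi, rfl, hhom⟩, rfl⟩ | ⟨v, ⟨i, hvi, rfl, hhom⟩, rfl⟩)
      · have hveq : prefixWord n i ++ ((n :: desc (n - 2) k) ++ [n - 1]) =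
            (prefixWord n i ++ n :: desc (n - 2) k) ++ [n - 1] :=
          (List.append_assoc _ _ _).symm
        have hh := homogD_iff.mp hhom
        rw [hveq] at hh
        show (prefixWord n i ++ ((n :: desc (n - 2) k) ++ [n - 1])).dropLast ∈ C
        rw [hveq, List.dropLast_concat]
        exact ⟨i, hvi, rfl, homogD_iff.mpr (homogD_prefix hh)⟩
      · rw [hcompute]
        refine ⟨Function.update i (n - 1) (n - 1), ?_, ?_, ?_⟩
        · intro j hj1 hj2
          by_cases hj : j = n - 1
          · subst hj; rw [Function.update_self]; omega
          · rw [Function.update_of_ne hj]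
            exact hvi j hj1 (by omega)
        · have h1 : prefixWord n (Function.update i (n - 1) (n - 1)) =
              prefixWord (n - 1) i ++ [n - 1] := by
            rw [prefixWord_succ (show 2 ≤ n by omega)]
            congr 1
            · apply prefixWord_congr
              intro j hj1 hj2
              rw [Function.update_of_ne (by omega)]
            · rw [Function.update_self, desc_n1_self hn5]
          rw [h1, List.append_assoc]
          simp
        · apply homogD_iff.mpr
          exact lemB_fwd hn5 hk1 hk2 (hPfact i hvi) (homogD_iff.mp hhom)
  -- disjointness via the split predicate
  have hdisj : Disjoint (List.dropLast '' L) (F '' R) := by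
    rw [Set.disjoint_left]
    rintro w ⟨v, ⟨i, hvi, rfl, hhom⟩, rfl⟩ ⟨v', ⟨i', hvi', rfl, hhom'⟩, hfun⟩
    have hveq : prefixWord n i ++ ((n :: desc (n - 2) k) ++ [n - 1]) =
        (prefixWord n i ++ n :: desc (n - 2) k) ++ [n - 1] :=
      (List.append_assoc _ _ _).symm
    have hh := homogD_iff.mp hhom
    rw [hveq] at hh
    have hne := notE hn5 hk1 hk2 hvi hh
    have hEfalse := (E_iff hn5 hk1 hk2 hvi).not.mpr hne
    rw [hcompute] at hfun
    have hfun2 : prefixWord (n - 1) i' ++ ((n - 1) :: n :: desc (n - 2) k) =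
        prefixWord n i ++ n :: desc (n - 2) k := by
      rw [hfun, hveq, List.dropLast_concat]
    apply hEfalse
    rw [← hfun2]
    have h2 : (prefixWord (n - 1) i' ++ ((n - 1) :: n :: desc (n - 2) k)) =
        (prefixWord (n - 1) i' ++ [n - 1]) ++ (n :: desc (n - 2) k) := by
      rw [List.append_assoc]; simp
    rw [h2]
    have h3 : ((prefixWord (n - 1) i' ++ [n - 1]) ++ (n :: desc (n - 2) k)).length - (n - k) =
        (prefixWord (n - 1) i' ++ [n - 1]).length := by
      simp [desc_length]; omega
    rw [h3, List.take_left, List.getLast?_concat]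
  -- injectivity on L
  have hinjL : Set.InjOn List.dropLast L := by
    rintro a ⟨ia, hva, rfl, -⟩ b ⟨ib, hvb, rfl, -⟩ hab
    have ha : prefixWord n ia ++ ((n :: desc (n - 2) k) ++ [n - 1]) =
        (prefixWord n ia ++ n :: desc (n - 2) k) ++ [n - 1] := (List.append_assoc _ _ _).symm
    have hb : prefixWord n ib ++ ((n :: desc (n - 2) k) ++ [n - 1]) =
        (prefixWord n ib ++ n :: desc (n - 2) k) ++ [n - 1] := (List.append_assoc _ _ _).symm
    rw [ha, hb, List.dropLast_concat, List.dropLast_concat] at hab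
    rw [ha, hb, hab]
  -- injectivity on R
  have hinjR : Set.InjOn F R := by
    rintro a ⟨ia, hva, rfl, -⟩ b ⟨ib, hvb, rfl, -⟩ hab
    rw [hcompute, hcompute] at hab
    have := List.append_cancel_right hab
    rw [this]
  rw [Nat.card_coe_set_eq, Nat.card_coe_set_eq, Nat.card_coe_set_eq, hsplit,
    Set.ncard_union_eq hdisj (finL.image _) (finR.image _),
    Set.ncard_image_of_injOn hinjL, Set.ncard_image_of_injOn hinjR]
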